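/- The map A ↦ P_A, sending a subset A ⊆ X to the orthogonal projection of ℓ²(X) onto the closed span of {e_x : x ∈ A}, is a Boolean homomorphism from the power set of X (hence from any Boolean algebra of subsets of X) to the Boolean algebra of projections of B(ℓ²(X)), and it is injective. In particular the Boolean homomorphism Λ : B(X,θ,G) → projections, extending D_g ↦ s_g s_g*, is injective for every discrete partial dynamical system, so C*(X,θ,G) ≠ 0 when X ≠ ∅. -/

import Mathlib

/-- A partial action of a group `G` on a set `X`. -/
structure PartialAction (G : Type*) [Group G] (X : Type*) where
  D : G → Set X
  act : G → X → X
  D_one : D 1 = Set.univ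
  act_one : ∀ x, act 1 x = x
  bijOn : ∀ g, Set.BijOn (act g) (D g⁻¹) (D g)
  image_inter : ∀ h i, act h '' (D h⁻¹ ∩ D i) = D h ∩ D (h * i)
  comp : ∀ h i x, x ∈ D i⁻¹ ∩ D (i⁻¹ * h⁻¹) → act h (act i x) = act (h * i) x

/-- The Boolean algebra of subsets of `X` generated by a family `S`. -/
inductive BoolGen {X : Type*} (S : Set (Set X)) : Set X → Prop
  | basic {A : Set X} : A ∈ S → BoolGen S A
  | univ : BoolGen S Set.univ
  | inter {A B : Set X} : BoolGen S A → BoolGen S B → BoolGen S (A ∩ B)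
  | compl {A : Set X} : BoolGen S A → BoolGen S Aᶜ

/-- The map `A ↦ P_A`, sending `A ⊆ X` to the orthogonal projection of `ℓ²(X)`
onto the closed span of `{e_x : x ∈ A}` (characterized by
`(P_A f)(x) = f(x)` for `x ∈ A` and `0` otherwise), is an injective Boolean
homomorphism into the projections of `B(ℓ²(X))`:
`P_{A ∩ B} = P_A P_B` and `P_{Aᶜ} = 1 - P_A`.  In particular, for a discrete
partial dynamical system `(X, θ, G)` with operators `S_g` as in the canonical
`ℓ²(X)`-representation, the Boolean homomorphism `Λ = P_{(-)}` extending
`D_g ↦ S_g S_g*` is injective, and (for `X ≠ ∅`) the represented algebra is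
nonzero. -/
theorem stmt12 {G X : Type*} [Group G] [DecidableEq X] (P : PartialAction G X)
    (Pr : Set X → (lp (fun _ : X => ℂ) 2 →L[ℂ] lp (fun _ : X => ℂ) 2))
    (hPr : ∀ (A : Set X) (f : lp (fun _ : X => ℂ) 2) (x : X),
      (Pr A f) x = Set.indicator A (fun y => f y) x)
    (S : G → (lp (fun _ : X => ℂ) 2 →L[ℂ] lp (fun _ : X => ℂ) 2))
    (hS : ∀ (g : G) (f : lp (fun _ : X => ℂ) 2) (x : X),
      (S g f) x = Set.indicator (P.D g) (fun y => f (P.act g⁻¹ y)) x) :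
    (∀ A B : Set X, Pr (A ∩ B) = Pr A * Pr B) ∧
    (∀ A : Set X, Pr Aᶜ = 1 - Pr A) ∧
    Function.Injective Pr ∧
    (∀ g : G, Pr (P.D g) = S g * star (S g)) ∧
    (Nonempty X →
      (1 : lp (fun _ : X => ℂ) 2 →L[ℂ] lp (fun _ : X => ℂ) 2) ≠ 0) := by
  classical
  -- membership from indicator values at `lp.single`
  have key : ∀ (A : Set X) (x : X),
      (Pr A (lp.single 2 x 1)) x = if x ∈ A then 1 else 0 := by
    intro A x
    rw [hPr]
    by_cases hx : x ∈ A
    · simp [Set.indicator_of_mem hx, lp.single_apply_self, hx]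
    · simp [Set.indicator_of_notMem hx, hx]
  refine ⟨?_, ?_, ?_, ?_, ?_⟩
  · -- intersections
    intro A B
    ext f x
    have : (Pr A (Pr B f)) x = Set.indicator A (fun y => Set.indicator B (fun z => f z) y) x := by
      rw [hPr]
      by_cases hx : x ∈ A
      · simp [Set.indicator_of_mem hx, hPr]
      · simp [Set.indicator_of_notMem hx]
    simp only [ContinuousLinearMap.mul_apply]
    rw [this, Set.indicator_indicator, hPr]
  · -- complements
    intro A
    ext f x
    have h1 : ((1 - Pr A) f) x = f x - (Pr A f) x := by
      simp [ContinuousLinearMap.sub_apply]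
    rw [h1, hPr, hPr, Set.indicator_compl, Pi.sub_apply]
  · -- injectivity
    intro A B hAB
    ext x
    have hk := key A x
    rw [hAB, key B x] at hk
    constructor
    · intro hA
      by_contra hB
      rw [if_pos hA, if_neg hB] at hk
      exact absurd hk (by norm_num)
    · intro hB
      by_contra hA
      rw [if_neg hA, if_pos hB] at hk
      exact absurd hk (by norm_num)
  · -- Λ(D_g) = S_g S_g*
    intro g
    have hstar : star (S g) = S g⁻¹ := by
      have hadj : S g⁻¹ = ContinuousLinearMap.adjoint (S g) := by
        rw [ContinuousLinearMap.eq_adjoint_iff]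
        intro f h
        rw [lp.inner_eq_tsum, lp.inner_eq_tsum]
        have hL : ∀ x : X, (inner ℂ ((S g⁻¹ f) x) (h x) : ℂ) =
            Set.indicator (P.D g⁻¹) (fun y => (inner ℂ (f (P.act g y)) (h y) : ℂ)) x := by
          intro x
          rw [hS]
          by_cases hx : x ∈ P.D g⁻¹
          · simp [Set.indicator_of_mem hx]
          · simp [Set.indicator_of_notMem hx]
        have hR : ∀ x : X, (inner ℂ (f x) ((S g h) x) : ℂ) =
            Set.indicator (P.D g) (fun y => (inner ℂ (f y) (h (P.act g⁻¹ y)) : ℂ)) x := by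
          intro x
          rw [hS]
          by_cases hx : x ∈ P.D g
          · simp [Set.indicator_of_mem hx]
          · simp [Set.indicator_of_notMem hx]
        calc ∑' x, (inner ℂ ((S g⁻¹ f) x) (h x) : ℂ)
            = ∑' x, Set.indicator (P.D g⁻¹)
                (fun y => (inner ℂ (f (P.act g y)) (h y) : ℂ)) x := by
              exact tsum_congr hL
          _ = ∑' x : (P.D g⁻¹ : Set X), (inner ℂ (f (P.act g x)) (h x) : ℂ) := by
              exact (tsum_subtype (P.D g⁻¹) fun y => (inner ℂ (f (P.act g y)) (h y) : ℂ)).symm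
          _ = ∑' x : (P.D g : Set X), (inner ℂ (f x) (h (P.act g⁻¹ x)) : ℂ) := by
              rw [← Equiv.tsum_eq ((P.bijOn g).equiv (P.act g))
                (fun x : (P.D g : Set X) => (inner ℂ (f x) (h (P.act g⁻¹ x)) : ℂ))]
              refine tsum_congr fun x => ?_
              have hcoe : (((P.bijOn g).equiv (P.act g)) x : X) = P.act g x := rfl
              have hxmem : (x : X) ∈ P.D g⁻¹ := x.2
              have hback : P.act g⁻¹ (P.act g x) = x := by
                have := P.comp g⁻¹ g x ⟨hxmem, by
                  rw [mul_inv_cancel, P.D_one]; trivial⟩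
                rw [this, inv_mul_cancel, P.act_one]
              rw [hcoe, hback]
          _ = ∑' x, Set.indicator (P.D g)
                (fun y => (inner ℂ (f y) (h (P.act g⁻¹ y)) : ℂ)) x := by
              exact tsum_subtype (P.D g) fun y => (inner ℂ (f y) (h (P.act g⁻¹ y)) : ℂ)
          _ = ∑' x, (inner ℂ (f x) ((S g h) x) : ℂ) := by
              exact (tsum_congr hR).symm
      rw [ContinuousLinearMap.star_eq_adjoint, ← hadj]
    rw [hstar]
    ext f x
    simp only [ContinuousLinearMap.mul_apply]
    rw [hPr, hS]
    by_cases hx : x ∈ P.D g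
    · rw [Set.indicator_of_mem hx, Set.indicator_of_mem hx, hS]
      have hmem : P.act g⁻¹ x ∈ P.D g⁻¹ := (P.bijOn g⁻¹).mapsTo (by rwa [inv_inv])
      rw [Set.indicator_of_mem hmem]
      have hforward : P.act g (P.act g⁻¹ x) = x := by
        have := P.comp g g⁻¹ x ⟨by rwa [inv_inv], by
          rw [inv_inv, mul_inv_cancel, P.D_one]; trivial⟩
        rw [this, mul_inv_cancel, P.act_one]
      rw [inv_inv, hforward]
    · rw [Set.indicator_of_notMem hx, Set.indicator_of_notMem hx]
  · -- nontriviality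
    rintro ⟨x⟩ h10
    have : ((lp.single 2 x (1 : ℂ)) : lp (fun _ : X => ℂ) 2) x = 0 := by
      have := congrArg (fun T : lp (fun _ : X => ℂ) 2 →L[ℂ] lp (fun _ : X => ℂ) 2 =>
        (T ((lp.single 2 x (1 : ℂ)) : lp (fun _ : X => ℂ) 2)) x) h10
      simpa using this
    rw [lp.single_apply_self] at this
    exact one_ne_zero this
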